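/- Let p₁, p₂ ∈ ℝ³, let n₁ ∈ ℝ³ with ‖n₁‖ = 1, set w₁₂ = (p₂ − p₁)·n₁ and the edge control points b₁₂ = (2p₁ + p₂ − w₁₂ n₁)/3, b₂₁ = (2p₂ + p₁ − ((p₁ − p₂)·n₂) n₂)/3 (for any n₂ ∈ ℝ³). Then the cubic Bézier boundary curve c(t) = (1−t)³ p₁ + 3(1−t)² t b₁₂ + 3(1−t) t² b₂₁ + t³ p₂ satisfies c′(0) · n₁ = 0; that is, the PN-triangle boundary curve leaves the corner p₁ tangentially to the plane through p₁ with unit normal n₁. -/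

import Mathlib

/-- The PN-triangle cubic Bézier boundary curve leaves the corner `p₁` tangentially
to the plane through `p₁` with unit normal `n₁`: `c′(0) ⬝ n₁ = 0`. -/
theorem pn_boundary_tangent_at_start
    (p₁ p₂ n₁ n₂ : EuclideanSpace ℝ (Fin 3))
    (hn₁ : ‖n₁‖ = 1)
    (b₁₂ b₂₁ : EuclideanSpace ℝ (Fin 3))
    (hb₁₂ : b₁₂ = (3 : ℝ)⁻¹ •
      ((2 : ℝ) • p₁ + p₂ - (inner ℝ (p₂ - p₁) n₁ : ℝ) • n₁))
    (hb₂₁ : b₂₁ = (3 : ℝ)⁻¹ •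
      ((2 : ℝ) • p₂ + p₁ - (inner ℝ (p₁ - p₂) n₂ : ℝ) • n₂))
    (c : ℝ → EuclideanSpace ℝ (Fin 3))
    (hc : ∀ t : ℝ, c t = (1 - t) ^ 3 • p₁ + (3 * (1 - t) ^ 2 * t) • b₁₂ +
      (3 * (1 - t) * t ^ 2) • b₂₁ + t ^ 3 • p₂) :
    (inner ℝ (deriv c 0) n₁ : ℝ) = 0 := by
  have hceq : c = fun t : ℝ => (1 - t) ^ 3 • p₁ + (3 * (1 - t) ^ 2 * t) • b₁₂ +
      (3 * (1 - t) * t ^ 2) • b₂₁ + t ^ 3 • p₂ := funext hc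
  have hid : HasDerivAt (fun t : ℝ => t) 1 0 := hasDerivAt_id 0
  have h1 : HasDerivAt (fun t : ℝ => (1 - t) ^ 3) (-3) 0 := by
    have := (hid.const_sub 1).pow 3
    norm_num at this
    exact this
  have h2 : HasDerivAt (fun t : ℝ => 3 * (1 - t) ^ 2 * t) 3 0 := by
    have := ((((hid.const_sub 1).pow 2).const_mul 3).mul hid)
    norm_num at this
    exact this
  have h3 : HasDerivAt (fun t : ℝ => 3 * (1 - t) * t ^ 2) 0 0 := by
    have := (((hid.const_sub 1).const_mul 3).mul (hid.pow 2))
    norm_num at this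
    exact this
  have h4 : HasDerivAt (fun t : ℝ => t ^ 3) 0 0 := by
    have := hid.pow 3
    norm_num at this
    exact this
  have hD : HasDerivAt c ((-3 : ℝ) • p₁ + (3 : ℝ) • b₁₂ + (0 : ℝ) • b₂₁ + (0 : ℝ) • p₂) 0 := by
    rw [hceq]
    exact ((((h1.smul_const p₁).add (h2.smul_const b₁₂)).add (h3.smul_const b₂₁)).add
      (h4.smul_const p₂))
  rw [hD.deriv, hb₁₂]
  simp only [zero_smul, add_zero, smul_smul, inner_add_left, inner_sub_left,
    inner_smul_left, real_inner_smul_left, real_inner_self_eq_norm_mul_norm, hn₁, conj_trivial]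
  ring
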